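/- Let a, b ∈ ℝ and work in the dual numbers ℝ[ε] = ℝ ⊕ ℝε with ε² = 0. Set A = a + bε and τ(x, t) = 1 + exp(2Ax + 2A³t) ∈ ℝ[ε], and write τ(x, t) = τ₀(x, t) + τ₁(x, t)ε for its components (so τ₀(x, t) = 1 + e^{2ax + 2a³t} > 0). Then the functions v := ∂_x²( log τ₀ ) and w := ∂_x²( τ₁ / τ₀ ) satisfy the coupled KdV equations 4 v_t − 12 v v_x − v_{xxx} = 0 and 4 w_t − 12 (v w)_x − w_{xxx} = 0. -/

import Mathlib

open TrivSqZeroExt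

noncomputable def uf (a : ℝ) : ℝ × ℝ → ℝ := fun p => 2*a*p.1 + 2*a^3*p.2
noncomputable def gf (a : ℝ) : ℝ × ℝ → ℝ := fun p => Real.exp (uf a p) / (1 + Real.exp (uf a p))
noncomputable def sf (a b : ℝ) : ℝ × ℝ → ℝ := fun p => 2*b*p.1 + 6*a^2*b*p.2

lemma poly5 (c0 c1 c2 c3 c4 c5 y : ℝ) :
    HasDerivAt (fun y : ℝ => c0 + c1*y + c2*y^2 + c3*y^3 + c4*y^4 + c5*y^5)
      (c1 + 2*c2*y + 3*c3*y^2 + 4*c4*y^3 + 5*c5*y^4) y := by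
  have h : HasDerivAt (fun y : ℝ => c0 + c1*y + c2*y^2 + c3*y^3 + c4*y^4 + c5*y^5)
      (0 + (c1*1) + (c2*(2*y^1)) + (c3*(3*y^2)) + (c4*(4*y^3)) + (c5*(5*y^4))) y :=
    ((((((hasDerivAt_const y c0).add ((hasDerivAt_id y).const_mul c1)).add
      ((hasDerivAt_pow 2 y).const_mul c2)).add ((hasDerivAt_pow 3 y).const_mul c3)).add
      ((hasDerivAt_pow 4 y).const_mul c4)).add ((hasDerivAt_pow 5 y).const_mul c5))
  convert h using 1; ring

lemma master (a b : ℝ) (q0 q1 q2 q3 q4 q5 r0 r1 r2 r3 r4 r5 : ℝ)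
    (f : ℝ × ℝ → ℝ)
    (hf : ∀ q, f q = (q0 + q1*(gf a q) + q2*(gf a q)^2 + q3*(gf a q)^3 + q4*(gf a q)^4 + q5*(gf a q)^5)
      + sf a b q * (r0 + r1*(gf a q) + r2*(gf a q)^2 + r3*(gf a q)^3 + r4*(gf a q)^4 + r5*(gf a q)^5))
    (c d : ℝ) (p : ℝ × ℝ) :
    lineDeriv ℝ f p (c, d) =
      (2*a*c + 2*a^3*d) * (gf a p * (1 - gf a p)) *
        (q1 + 2*q2*(gf a p) + 3*q3*(gf a p)^2 + 4*q4*(gf a p)^3 + 5*q5*(gf a p)^4)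
      + (2*b*c + 6*a^2*b*d) * (r0 + r1*(gf a p) + r2*(gf a p)^2 + r3*(gf a p)^3 + r4*(gf a p)^4 + r5*(gf a p)^5)
      + sf a b p * ((2*a*c + 2*a^3*d) * (gf a p * (1 - gf a p)) *
        (r1 + 2*r2*(gf a p) + 3*r3*(gf a p)^2 + 4*r4*(gf a p)^3 + 5*r5*(gf a p)^4)) := by
  have hne : 1 + Real.exp (uf a p) ≠ 0 := ne_of_gt (by positivity)
  set k : ℝ := 2*a*c + 2*a^3*d with hk
  set m : ℝ := 2*b*c + 6*a^2*b*d with hm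
  have hu : ∀ t : ℝ, uf a (p + t • (c, d)) = uf a p + k * t := by
    intro t; simp [uf, Prod.smul_def, smul_eq_mul, hk]; ring
  have hseq : ∀ t : ℝ, sf a b (p + t • (c, d)) = sf a b p + m * t := by
    intro t; simp [sf, Prod.smul_def, smul_eq_mul, hm]; ring
  have huD : HasDerivAt (fun t : ℝ => uf a (p + t • (c, d))) k 0 := by
    have h1 : HasDerivAt (fun t : ℝ => uf a p + k * t) k 0 := by
      simpa using ((hasDerivAt_id (0:ℝ)).const_mul k).const_add (uf a p)
    exact h1.congr_of_eventuallyEq (by filter_upwards with t; rw [hu t])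
  have hED : HasDerivAt (fun t : ℝ => Real.exp (uf a (p + t • (c, d))))
      (Real.exp (uf a p) * k) 0 := by
    have := huD.exp
    simpa using this
  set E : ℝ := Real.exp (uf a p) with hE
  set g0 : ℝ := gf a p with hg0
  have hgD : HasDerivAt (fun t : ℝ => gf a (p + t • (c, d))) (k * (g0 * (1 - g0))) 0 := by
    have hden : ∀ t : ℝ, 1 + Real.exp (uf a (p + t • (c, d))) ≠ 0 := fun t =>
      ne_of_gt (by positivity)
    have h2 : HasDerivAt (fun t : ℝ => Real.exp (uf a (p + t • (c, d))) / (1 + Real.exp (uf a (p + t • (c, d)))))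
        ((Real.exp (uf a p) * k * (1 + Real.exp (uf a p)) - Real.exp (uf a p) * (0 + Real.exp (uf a p) * k)) / (1 + Real.exp (uf a p)) ^ 2) 0 := by
      have := hED.div ((hasDerivAt_const (0:ℝ) (1:ℝ)).add hED) (by simp only [Pi.add_apply, zero_smul, add_zero]; exact hne)
      refine this.congr_deriv ?_; simp only [Pi.add_apply, zero_smul, add_zero, hE]
    have h3 : HasDerivAt (fun t : ℝ => gf a (p + t • (c, d)))
        ((E * k * (1 + E) - E * (0 + E * k)) / (1 + E) ^ 2) 0 := h2
    convert h3 using 1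
    rw [hg0]; show _ = _
    have : gf a p = E / (1 + E) := rfl
    rw [this]; field_simp; ring
  have hsD : HasDerivAt (fun t : ℝ => sf a b (p + t • (c, d))) m 0 := by
    have h1 : HasDerivAt (fun t : ℝ => sf a b p + m * t) m 0 := by
      simpa using ((hasDerivAt_id (0:ℝ)).const_mul m).const_add (sf a b p)
    exact h1.congr_of_eventuallyEq (by filter_upwards with t; rw [hseq t])
  have hg00 : gf a (p + (0:ℝ) • (c, d)) = g0 := by rw [hg0]; norm_num
  have hQ : HasDerivAt (fun t : ℝ => q0 + q1*(gf a (p + t • (c, d))) + q2*(gf a (p + t • (c, d)))^2 + q3*(gf a (p + t • (c, d)))^3 + q4*(gf a (p + t • (c, d)))^4 + q5*(gf a (p + t • (c, d)))^5)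
      ((q1 + 2*q2*g0 + 3*q3*g0^2 + 4*q4*g0^3 + 5*q5*g0^4) * (k * (g0 * (1 - g0)))) 0 := by
    have base := ((((((hasDerivAt_const (0:ℝ) q0).add (hgD.const_mul q1)).add
      ((hgD.pow 2).const_mul q2)).add ((hgD.pow 3).const_mul q3)).add
      ((hgD.pow 4).const_mul q4)).add ((hgD.pow 5).const_mul q5))
    refine base.congr_deriv ?_
    rw [hg00]; push_cast; ring
  have hR : HasDerivAt (fun t : ℝ => r0 + r1*(gf a (p + t • (c, d))) + r2*(gf a (p + t • (c, d)))^2 + r3*(gf a (p + t • (c, d)))^3 + r4*(gf a (p + t • (c, d)))^4 + r5*(gf a (p + t • (c, d)))^5)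
      ((r1 + 2*r2*g0 + 3*r3*g0^2 + 4*r4*g0^3 + 5*r5*g0^4) * (k * (g0 * (1 - g0)))) 0 := by
    have base := ((((((hasDerivAt_const (0:ℝ) r0).add (hgD.const_mul r1)).add
      ((hgD.pow 2).const_mul r2)).add ((hgD.pow 3).const_mul r3)).add
      ((hgD.pow 4).const_mul r4)).add ((hgD.pow 5).const_mul r5))
    refine base.congr_deriv ?_
    rw [hg00]; push_cast; ring
  have htot := hQ.add (hsD.mul hR)
  have hfun : (fun t : ℝ => f (p + t • (c, d))) = (fun t : ℝ =>
      (q0 + q1*(gf a (p + t • (c, d))) + q2*(gf a (p + t • (c, d)))^2 + q3*(gf a (p + t • (c, d)))^3 + q4*(gf a (p + t • (c, d)))^4 + q5*(gf a (p + t • (c, d)))^5)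
      + sf a b (p + t • (c, d)) * (r0 + r1*(gf a (p + t • (c, d))) + r2*(gf a (p + t • (c, d)))^2 + r3*(gf a (p + t • (c, d)))^3 + r4*(gf a (p + t • (c, d)))^4 + r5*(gf a (p + t • (c, d)))^5)) := by
    funext t; exact hf _
  rw [lineDeriv, hfun]
  erw [htot.deriv]
  have hs00 : sf a b (p + (0:ℝ) • (c, d)) = sf a b p := by norm_num
  rw [hg00, hs00]
  ring

lemma masterlog (a : ℝ) (f : ℝ × ℝ → ℝ)
    (hf : ∀ q, f q = Real.log (1 + Real.exp (uf a q))) (p : ℝ × ℝ) :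
    lineDeriv ℝ f p (1, 0) = 2*a*(gf a p) := by
  have hne : 1 + Real.exp (uf a p) ≠ 0 := ne_of_gt (by positivity)
  have hu : ∀ t : ℝ, uf a (p + t • ((1:ℝ), (0:ℝ))) = uf a p + (2*a) * t := by
    intro t; simp [uf, Prod.smul_def, smul_eq_mul]; ring
  have huD : HasDerivAt (fun t : ℝ => uf a (p + t • ((1:ℝ), (0:ℝ)))) (2*a) 0 := by
    have h1 : HasDerivAt (fun t : ℝ => uf a p + (2*a) * t) (2*a) 0 := by
      simpa using ((hasDerivAt_id (0:ℝ)).const_mul (2*a)).const_add (uf a p)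
    exact h1.congr_of_eventuallyEq (by filter_upwards with t; rw [hu t])
  have hED : HasDerivAt (fun t : ℝ => Real.exp (uf a (p + t • ((1:ℝ), (0:ℝ)))))
      (Real.exp (uf a p) * (2*a)) 0 := by simpa using huD.exp
  have hlogD : HasDerivAt (fun t : ℝ => Real.log (1 + Real.exp (uf a (p + t • ((1:ℝ), (0:ℝ))))))
      ((0 + Real.exp (uf a p) * (2*a)) / (1 + Real.exp (uf a p))) 0 := by
    have := (((hasDerivAt_const (0:ℝ) (1:ℝ)).add hED).log (by simp only [Pi.add_apply, zero_smul, add_zero]; exact hne))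
    refine this.congr_deriv ?_; simp only [Pi.add_apply, zero_smul, add_zero]
  have hfun : (fun t : ℝ => f (p + t • ((1:ℝ), (0:ℝ)))) =
      (fun t : ℝ => Real.log (1 + Real.exp (uf a (p + t • ((1:ℝ), (0:ℝ)))))) := by
    funext t; exact hf _
  rw [lineDeriv, hfun, hlogD.deriv]
  show _ = 2*a*(Real.exp (uf a p) / (1 + Real.exp (uf a p)))
  field_simp
  ring


/-- Partial derivative in the `x`-direction of a function of `(x, t) : ℝ × ℝ`. -/
noncomputable def pdX (f : ℝ × ℝ → ℝ) : ℝ × ℝ → ℝ :=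
  fun p => lineDeriv ℝ f p (1, 0)

/-- Partial derivative in the `t`-direction. -/
noncomputable def pdT (f : ℝ × ℝ → ℝ) : ℝ × ℝ → ℝ :=
  fun p => lineDeriv ℝ f p (0, 1)

/-- let `A = a + bε` in the dual numbers `ℝ[ε]`, let
`τ(x,t) = 1 + exp(2Ax + 2A³t)` with components `τ = τ₀ + τ₁ ε`.  Then
`v := ∂_x²(log τ₀)` and `w := ∂_x²(τ₁/τ₀)` satisfy the coupled KdV equations
`4v_t − 12vv_x − v_{xxx} = 0` and `4w_t − 12(vw)_x − w_{xxx} = 0`. -/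
theorem stmt4 (a b : ℝ)
    (A : DualNumber ℝ) (hA : A = inl a + inr b)
    (τ : ℝ × ℝ → DualNumber ℝ)
    (hτ : τ = fun p => 1 + NormedSpace.exp ((2 * p.1) • A + (2 * p.2) • A ^ 3))
    (τ₀ τ₁ : ℝ × ℝ → ℝ)
    (hτ₀ : τ₀ = fun p => fst (τ p)) (hτ₁ : τ₁ = fun p => snd (τ p))
    (v w : ℝ × ℝ → ℝ)
    (hv : v = pdX (pdX fun p => Real.log (τ₀ p)))
    (hw : w = pdX (pdX fun p => τ₁ p / τ₀ p)) :
    (∀ p, 4 * pdT v p - 12 * (v p * pdX v p) - pdX (pdX (pdX v)) p = 0)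
      ∧ (∀ p, 4 * pdT w p - 12 * pdX (fun q => v q * w q) p - pdX (pdX (pdX w)) p = 0) := by
  have h0 : ∀ q, τ₀ q = 1 + Real.exp (uf a q) := by
    intro q
    rw [hτ₀, hτ, hA]
    show fst (1 + NormedSpace.exp _) = _
    rw [fst_add, fst_one, fst_exp]
    simp [uf, Real.exp_eq_exp_ℝ]
    ring_nf
  have h1 : ∀ q, τ₁ q = Real.exp (uf a q) * sf a b q := by
    intro q
    rw [hτ₁, hτ, hA]
    show snd (1 + NormedSpace.exp _) = _
    rw [snd_add, snd_one, snd_exp]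
    simp [uf, sf, Real.exp_eq_exp_ℝ]
    ring_nf
  have hne : ∀ q : ℝ × ℝ, 1 + Real.exp (uf a q) ≠ 0 := fun q => ne_of_gt (by positivity)
  -- the v chain
  have hL : ∀ q, pdX (fun p => Real.log (τ₀ p)) q = (0 + (2*a)*(gf a q) + 0*(gf a q)^2 + 0*(gf a q)^3 + 0*(gf a q)^4 + 0*(gf a q)^5) + sf a b q * (0 + 0*(gf a q) + 0*(gf a q)^2 + 0*(gf a q)^3 + 0*(gf a q)^4 + 0*(gf a q)^5) := by
    intro q
    have h := masterlog a (fun p => Real.log (τ₀ p)) (fun q => by show Real.log (τ₀ q) = _; rw [h0 q]) q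
    simp only [pdX] at h ⊢
    rw [h]; ring
  have hvQR : ∀ q, v q = (0 + (4*a^2)*(gf a q) + (-4*a^2)*(gf a q)^2 + 0*(gf a q)^3 + 0*(gf a q)^4 + 0*(gf a q)^5) + sf a b q * (0 + 0*(gf a q) + 0*(gf a q)^2 + 0*(gf a q)^3 + 0*(gf a q)^4 + 0*(gf a q)^5) := by
    intro q
    rw [hv]
    have h := master a b 0 (2*a) 0 0 0 0 0 0 0 0 0 0 (pdX (fun p => Real.log (τ₀ p))) hL 1 0 q
    simp only [pdX] at h ⊢
    rw [h]; ring
  have hvx : ∀ q, pdX (v) q = (0 + (8*a^3)*(gf a q) + (-24*a^3)*(gf a q)^2 + (16*a^3)*(gf a q)^3 + 0*(gf a q)^4 + 0*(gf a q)^5) + sf a b q * (0 + 0*(gf a q) + 0*(gf a q)^2 + 0*(gf a q)^3 + 0*(gf a q)^4 + 0*(gf a q)^5) := by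
    intro q
    have h := master a b 0 (4*a^2) (-4*a^2) 0 0 0 0 0 0 0 0 0 (v) hvQR 1 0 q
    simp only [pdX] at h ⊢
    rw [h]; ring
  have hvxx : ∀ q, pdX (pdX v) q = (0 + (16*a^4)*(gf a q) + (-112*a^4)*(gf a q)^2 + (192*a^4)*(gf a q)^3 + (-96*a^4)*(gf a q)^4 + 0*(gf a q)^5) + sf a b q * (0 + 0*(gf a q) + 0*(gf a q)^2 + 0*(gf a q)^3 + 0*(gf a q)^4 + 0*(gf a q)^5) := by
    intro q
    have h := master a b 0 (8*a^3) (-24*a^3) (16*a^3) 0 0 0 0 0 0 0 0 (pdX v) hvx 1 0 q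
    simp only [pdX] at h ⊢
    rw [h]; ring
  -- the w chain
  have hW0 : ∀ q, (fun p => τ₁ p / τ₀ p) q = (0 + 0*(gf a q) + 0*(gf a q)^2 + 0*(gf a q)^3 + 0*(gf a q)^4 + 0*(gf a q)^5) + sf a b q * (0 + (1)*(gf a q) + 0*(gf a q)^2 + 0*(gf a q)^3 + 0*(gf a q)^4 + 0*(gf a q)^5) := by
    intro q
    show τ₁ q / τ₀ q = _
    rw [h0 q, h1 q]
    simp only [gf]
    field_simp
    ring
  have hw1 : ∀ q, pdX (fun p => τ₁ p / τ₀ p) q = (0 + (2*b)*(gf a q) + 0*(gf a q)^2 + 0*(gf a q)^3 + 0*(gf a q)^4 + 0*(gf a q)^5) + sf a b q * (0 + (2*a)*(gf a q) + (-2*a)*(gf a q)^2 + 0*(gf a q)^3 + 0*(gf a q)^4 + 0*(gf a q)^5) := by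
    intro q
    have h := master a b 0 0 0 0 0 0 0 (1) 0 0 0 0 (fun p => τ₁ p / τ₀ p) hW0 1 0 q
    simp only [pdX] at h ⊢
    rw [h]; ring
  have hwQR : ∀ q, w q = (0 + (8*a*b)*(gf a q) + (-8*a*b)*(gf a q)^2 + 0*(gf a q)^3 + 0*(gf a q)^4 + 0*(gf a q)^5) + sf a b q * (0 + (4*a^2)*(gf a q) + (-12*a^2)*(gf a q)^2 + (8*a^2)*(gf a q)^3 + 0*(gf a q)^4 + 0*(gf a q)^5) := by
    intro q
    rw [hw]
    have h := master a b 0 (2*b) 0 0 0 0 0 (2*a) (-2*a) 0 0 0 (pdX (fun p => τ₁ p / τ₀ p)) hw1 1 0 q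
    simp only [pdX] at h ⊢
    rw [h]; ring
  have hwx : ∀ q, pdX (w) q = (0 + (24*a^2*b)*(gf a q) + (-72*a^2*b)*(gf a q)^2 + (48*a^2*b)*(gf a q)^3 + 0*(gf a q)^4 + 0*(gf a q)^5) + sf a b q * (0 + (8*a^3)*(gf a q) + (-56*a^3)*(gf a q)^2 + (96*a^3)*(gf a q)^3 + (-48*a^3)*(gf a q)^4 + 0*(gf a q)^5) := by
    intro q
    have h := master a b 0 (8*a*b) (-8*a*b) 0 0 0 0 (4*a^2) (-12*a^2) (8*a^2) 0 0 (w) hwQR 1 0 q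
    simp only [pdX] at h ⊢
    rw [h]; ring
  have hwxx : ∀ q, pdX (pdX w) q = (0 + (64*a^3*b)*(gf a q) + (-448*a^3*b)*(gf a q)^2 + (768*a^3*b)*(gf a q)^3 + (-384*a^3*b)*(gf a q)^4 + 0*(gf a q)^5) + sf a b q * (0 + (16*a^4)*(gf a q) + (-240*a^4)*(gf a q)^2 + (800*a^4)*(gf a q)^3 + (-960*a^4)*(gf a q)^4 + (384*a^4)*(gf a q)^5) := by
    intro q
    have h := master a b 0 (24*a^2*b) (-72*a^2*b) (48*a^2*b) 0 0 0 (8*a^3) (-56*a^3) (96*a^3) (-48*a^3) 0 (pdX w) hwx 1 0 q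
    simp only [pdX] at h ⊢
    rw [h]; ring
  have hvw : ∀ q, (fun q => v q * w q) q = (0 + 0*(gf a q) + (32*a^3*b)*(gf a q)^2 + (-64*a^3*b)*(gf a q)^3 + (32*a^3*b)*(gf a q)^4 + 0*(gf a q)^5) + sf a b q * (0 + 0*(gf a q) + (16*a^4)*(gf a q)^2 + (-64*a^4)*(gf a q)^3 + (80*a^4)*(gf a q)^4 + (-32*a^4)*(gf a q)^5) := by
    intro q
    show v q * w q = _
    rw [hvQR q, hwQR q]; ring
  constructor
  · intro p
    have hvt := master a b 0 (4*a^2) (-4*a^2) 0 0 0 0 0 0 0 0 0 v hvQR 0 1 p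
    have hvxp := master a b 0 (4*a^2) (-4*a^2) 0 0 0 0 0 0 0 0 0 v hvQR 1 0 p
    have hvxxx := master a b 0 (16*a^4) (-112*a^4) (192*a^4) (-96*a^4) 0 0 0 0 0 0 0 (pdX (pdX v)) hvxx 1 0 p
    simp only [pdX, pdT] at hvxxx ⊢
    rw [hvQR p, hvt, hvxp, hvxxx]
    ring
  · intro p
    have hwt := master a b 0 (8*a*b) (-8*a*b) 0 0 0 0 (4*a^2) (-12*a^2) (8*a^2) 0 0 w hwQR 0 1 p
    have hvwx := master a b 0 0 (32*a^3*b) (-64*a^3*b) (32*a^3*b) 0 0 0 (16*a^4) (-64*a^4) (80*a^4) (-32*a^4) (fun q => v q * w q) hvw 1 0 p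
    have hwxxx := master a b 0 (64*a^3*b) (-448*a^3*b) (768*a^3*b) (-384*a^3*b) 0 0 (16*a^4) (-240*a^4) (800*a^4) (-960*a^4) (384*a^4) (pdX (pdX w)) hwxx 1 0 p
    simp only [pdX, pdT] at hvwx hwxxx ⊢
    rw [hwt, hvwx, hwxxx]
    ring
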